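/- If V(t) solves dV/dt = −V·(1/(C·R_A) + 1/(C·R_B)) with V(0) = V_DD·e^{-Δ/(C·R_A)} (Δ ≥ 0), then the total threshold-crossing time Δ + inf{t : V(t) ≤ V_DD/2} is bounded above by ln(2)·C·R_A for all Δ ∈ [0, ln(2)·C·R_A], with equality iff Δ = ln(2)·C·R_A. -/

import Mathlib

/-- MIS always speeds up (or equals) the SIS falling-output delay: if V solves
dV/dt = −V·(1/(C·R_A)+1/(C·R_B)) with V(0) = V_DD·e^{-Δ/(C·R_A)}, then
Δ + inf{t ≥ 0 : V(t) ≤ V_DD/2} ≤ ln(2)·C·R_A for Δ ∈ [0, ln(2)·C·R_A],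
with equality iff Δ = ln(2)·C·R_A. -/
theorem mis_speedup_bound
    (C RA RB VDD Δ : ℝ) (hC : 0 < C) (hRA : 0 < RA) (hRB : 0 < RB) (hVDD : 0 < VDD)
    (hΔ₀ : 0 ≤ Δ) (hΔ₁ : Δ ≤ Real.log 2 * C * RA)
    (V : ℝ → ℝ)
    (hODE : ∀ t, HasDerivAt V (-V t * (1 / (C * RA) + 1 / (C * RB))) t)
    (hV0 : V 0 = VDD * Real.exp (-Δ / (C * RA)))
    (T : ℝ) (hT : T = sInf {t : ℝ | 0 ≤ t ∧ V t ≤ VDD / 2}) :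
    Δ + T ≤ Real.log 2 * C * RA ∧
    (Δ + T = Real.log 2 * C * RA ↔ Δ = Real.log 2 * C * RA) := by
  set k : ℝ := 1 / (C * RA) + 1 / (C * RB) with hkdef
  have hCRA : 0 < C * RA := mul_pos hC hRA
  have hCRB : 0 < C * RB := mul_pos hC hRB
  have hk : 0 < k := by positivity
  have hkgt : 1 / (C * RA) < k := by
    have : 0 < 1 / (C * RB) := by positivity
    linarith
  -- the auxiliary constant function
  set g : ℝ → ℝ := fun t => V t * Real.exp (k * t) with hgdef
  have hg' : ∀ t, HasDerivAt g 0 t := by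
    intro t
    have he : HasDerivAt (fun t => Real.exp (k * t)) (Real.exp (k * t) * k) t := by
      simpa using ((hasDerivAt_id t).const_mul k).exp
    have : HasDerivAt (fun y => V y * Real.exp (k * y))
        (-V t * k * Real.exp (k * t) + V t * (Real.exp (k * t) * k)) t := (hODE t).mul he
    convert this using 1
    ring
  have hgconst : ∀ t, g t = g 0 := by
    intro t
    have hdiff : Differentiable ℝ g := fun x => (hg' x).differentiableAt
    have hderiv : ∀ x, deriv g x = 0 := fun x => (hg' x).deriv
    exact is_const_of_deriv_eq_zero hdiff hderiv t 0
  have hVt : ∀ t, V t = VDD * Real.exp (-Δ / (C * RA) - k * t) := by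
    intro t
    have h := hgconst t
    simp only [hgdef] at h
    have hexp : Real.exp (k * t) ≠ 0 := (Real.exp_pos _).ne'
    have : V t = V 0 * Real.exp (-(k * t)) := by
      rw [Real.exp_neg]
      field_simp at h ⊢
      simp at h
      linarith [h]
    rw [this, hV0, mul_assoc, ← Real.exp_add]
    ring_nf
  -- threshold time
  set t₀ : ℝ := (Real.log 2 - Δ / (C * RA)) / k with ht₀def
  have ht₀nn : 0 ≤ t₀ := by
    apply div_nonneg _ hk.le
    have : Δ / (C * RA) ≤ Real.log 2 := by
      rw [div_le_iff₀ hCRA]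
      linarith [hΔ₁, mul_assoc (Real.log 2) C RA]
    linarith
  have hset : {t : ℝ | 0 ≤ t ∧ V t ≤ VDD / 2} = Set.Ici t₀ := by
    ext t
    simp only [Set.mem_setOf_eq, Set.mem_Ici]
    have hiff : V t ≤ VDD / 2 ↔ t₀ ≤ t := by
      rw [hVt t]
      rw [show (VDD / 2 : ℝ) = VDD * Real.exp (-Real.log 2) by
        rw [Real.exp_neg, Real.exp_log (by norm_num : (0:ℝ) < 2)]; ring]
      rw [mul_le_mul_iff_right₀ hVDD, Real.exp_le_exp, ht₀def, div_le_iff₀ hk,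
        neg_div]
      constructor <;> intro h <;> nlinarith [mul_comm k t]
    constructor
    · exact fun ⟨_, h⟩ => hiff.mp h
    · exact fun h => ⟨le_trans ht₀nn h, hiff.mpr h⟩
  have hTeq : T = t₀ := by rw [hT, hset, csInf_Ici]
  -- arithmetic
  have hnum : 0 ≤ Real.log 2 - Δ / (C * RA) := by
    have : Δ / (C * RA) ≤ Real.log 2 := by
      rw [div_le_iff₀ hCRA]; linarith [mul_assoc (Real.log 2) C RA]
    linarith
  have hle : Δ + T ≤ Real.log 2 * C * RA := by
    rw [hTeq, ht₀def]
    have h1 : (Real.log 2 - Δ / (C * RA)) / k ≤ (Real.log 2 - Δ / (C * RA)) * (C * RA) := by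
      rw [div_le_iff₀ hk]
      have hk1 : 1 ≤ k * (C * RA) := by
        have := (div_le_iff₀ hCRA).mp hkgt.le
        nlinarith
      nlinarith [mul_le_mul_of_nonneg_left hk1 hnum]
    have h2 : (Real.log 2 - Δ / (C * RA)) * (C * RA) = Real.log 2 * C * RA - Δ := by
      field_simp
    linarith
  refine ⟨hle, ⟨fun heq => ?_, fun heq => ?_⟩⟩
  · by_contra hne
    have hΔlt : Δ < Real.log 2 * C * RA := lt_of_le_of_ne hΔ₁ hne
    have hnumpos : 0 < Real.log 2 - Δ / (C * RA) := by
      rw [sub_pos, div_lt_iff₀ hCRA]; linarith [mul_assoc (Real.log 2) C RA]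
    have h1 : (Real.log 2 - Δ / (C * RA)) / k < (Real.log 2 - Δ / (C * RA)) * (C * RA) := by
      rw [div_lt_iff₀ hk]
      have hk1 : 1 < k * (C * RA) := by
        have := (div_lt_iff₀ hCRA).mp hkgt
        nlinarith
      nlinarith [mul_lt_mul_of_pos_left hk1 hnumpos]
    have h2 : (Real.log 2 - Δ / (C * RA)) * (C * RA) = Real.log 2 * C * RA - Δ := by
      field_simp
    rw [hTeq, ht₀def] at heq
    linarith
  · have : t₀ = 0 := by
      rw [ht₀def, div_eq_zero_iff]
      left
      rw [heq]
      field_simp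
      ring
    rw [hTeq, this, heq]; ring
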